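/- Fix an integer N ≥ 1, normalized coefficients d₁,…,d_N : (T²)^N → ℂ, δ ∈ (θ/2, 1/2 − θ), and ζ ∈ ℤ². For k ≥ 1 set L₀ = n_k^δ, choose ξ₀^{(k)} ∈ ℤ² with 4π²|ξ₀^{(k)}|² = n_{k−1}, write d(x,ξ) = Σ_{j=1}^N d_j(x) e_ξ(−x_j), and define on (T²)^N the random variables 𝒜_ζ^{(k)}(x) = Σ_{ξ ∈ A(n_k,L₀), 4π²|ξ+ζ|² < n_k} (4π²|ξ+ζ|² − n_k)^{−2} |d(x,ξ)|² + Σ_{ξ ∈ A(n_k,L₀), 4π²|ξ+ζ|² > n_{k+1}} (4π²|ξ+ζ|² − n_{k+1})^{−2} |d(x,ξ)|², and ℬ^{(k)}(x) = (n_{k+1} − n_{k−1})^{−2} |d(x, ξ₀^{(k)})|², and set Σ(ζ, n_k) = Σ_{ξ ∈ A(n_k,L₀), 4π²|ξ+ζ|² < n_k} (4π²|ξ+ζ|² − n_k)^{−2} + Σ_{ξ ∈ A(n_k,L₀), 4π²|ξ+ζ|² > n_{k+1}} (4π²|ξ+ζ|² − n_{k+1})^{−2}. Then, as k → ∞, E[𝒜_ζ^{(k)}]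 = (1 + o(1)) · Σ(ζ, n_k) and E[ℬ^{(k)}] = (1 + o(1)) · (n_{k+1} − n_{k−1})^{−2}; in particular, whenever Σ(ζ, n_k) > 0 for all large k, E[𝒜_ζ^{(k)}]/E[ℬ^{(k)}] ∼ (n_{k+1} − n_{k−1})² · Σ(ζ, n_k). -/

import Mathlib

open Real MeasureTheory Filter Finset

noncomputable section

instance : Fact ((0:ℝ) < 1) := ⟨one_pos⟩

/-- The standard torus `ℝ²/ℤ²`. -/
abbrev T2 := Fin 2 → AddCircle (1:ℝ)

/-- `m` is a sum of two integer squares. -/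
def IsSum2Sq (m : ℕ) : Prop := ∃ a b : ℤ, (m : ℤ) = a ^ 2 + b ^ 2

/-- The increasing enumeration `n₀ < n₁ < ⋯` of `S = {4π²m : m a sum of two squares}`. -/
noncomputable def nseq (k : ℕ) : ℝ := 4 * Real.pi ^ 2 * (Nat.nth IsSum2Sq k)

/-- The character `e_ξ(x) = exp(2πi⟨ξ,x⟩)` on the torus. -/
noncomputable def eChar (ξ : Fin 2 → ℤ) (y : T2) : ℂ :=
  ∏ i, fourier (ξ i) (y i)

/-- Huxley's exponent in the circle law. -/
noncomputable def θH : ℝ := 133 / 416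

/-- `4π²|ξ|²`. -/
noncomputable def qf (ξ : Fin 2 → ℤ) : ℝ := 4 * Real.pi ^ 2 * ∑ i, (ξ i : ℝ) ^ 2

/-- `d(x,ξ) = Σ_j d_j(x) e_ξ(−x_j)`. -/
noncomputable def dsum {N : ℕ} (dd : Fin N → ((Fin N → T2) → ℂ))
    (x : Fin N → T2) (ξ : Fin 2 → ℤ) : ℂ :=
  ∑ j, dd j x * eChar ξ (-(x j))

/-- The deterministic lattice sum `Σ(ζ, n_k)`. -/
noncomputable def SigmaSum (ζ : Fin 2 → ℤ) (nk nk1 L0 : ℝ) : ℝ :=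
  (∑' ξ : Fin 2 → ℤ,
      if |qf ξ - nk| ≤ L0 ∧ qf (ξ + ζ) < nk then ((qf (ξ + ζ) - nk) ^ 2)⁻¹ else 0)
  + ∑' ξ : Fin 2 → ℤ,
      if |qf ξ - nk| ≤ L0 ∧ nk1 < qf (ξ + ζ) then ((qf (ξ + ζ) - nk1) ^ 2)⁻¹ else 0

/-- The random variable `𝒜_ζ^{(k)}`. -/
noncomputable def Afun {N : ℕ} (dd : Fin N → ((Fin N → T2) → ℂ)) (ζ : Fin 2 → ℤ)
    (nk nk1 L0 : ℝ) (x : Fin N → T2) : ℝ :=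
  (∑' ξ : Fin 2 → ℤ,
      if |qf ξ - nk| ≤ L0 ∧ qf (ξ + ζ) < nk then
        ((qf (ξ + ζ) - nk) ^ 2)⁻¹ * ‖dsum dd x ξ‖ ^ 2 else 0)
  + ∑' ξ : Fin 2 → ℤ,
      if |qf ξ - nk| ≤ L0 ∧ nk1 < qf (ξ + ζ) then
        ((qf (ξ + ζ) - nk1) ^ 2)⁻¹ * ‖dsum dd x ξ‖ ^ 2 else 0

/-- The random variable `ℬ^{(k)}`. -/
noncomputable def Bfun {N : ℕ} (dd : Fin N → ((Fin N → T2) → ℂ)) (ξ₀ : Fin 2 → ℤ)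
    (nk1 nkm1 : ℝ) (x : Fin N → T2) : ℝ :=
  ((nk1 - nkm1) ^ 2)⁻¹ * ‖dsum dd x ξ₀‖ ^ 2


section AuxLemmas
open ComplexConjugate

instance : IsProbabilityMeasure (volume : Measure (AddCircle (1:ℝ))) :=
  ⟨by rw [AddCircle.measure_univ]; exact ENNReal.ofReal_one⟩

lemma echar_norm (ξ : Fin 2 → ℤ) (y : T2) : ‖eChar ξ y‖ = 1 := by
  rw [eChar, norm_prod]
  refine Finset.prod_eq_one fun i _ => ?_
  rw [fourier_apply, Circle.norm_coe]

lemma echar_continuous (ξ : Fin 2 → ℤ) : Continuous (eChar ξ) := by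
  unfold eChar
  exact continuous_finset_prod _ fun i _ => (fourier (ξ i)).continuous.comp (continuous_apply i)

lemma echar_conj (ξ : Fin 2 → ℤ) (y : T2) : conj (eChar ξ y) = eChar (-ξ) y := by
  rw [eChar, eChar, map_prod]
  exact Finset.prod_congr rfl fun i _ => by rw [Pi.neg_apply, fourier_neg]

lemma echar_mul (ξ ξ' : Fin 2 → ℤ) (y : T2) : eChar ξ y * eChar ξ' y = eChar (ξ + ξ') y := by
  rw [eChar, eChar, eChar, ← Finset.prod_mul_distrib]
  exact Finset.prod_congr rfl fun i _ => by rw [Pi.add_apply, fourier_add]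

lemma fourier_neg_arg (n : ℤ) (x : AddCircle (1:ℝ)) : fourier n (-x) = fourier (-n) x := by
  rw [fourier_apply, fourier_apply, smul_neg, ← neg_smul]

lemma echar_neg_arg (ξ : Fin 2 → ℤ) (y : T2) : eChar ξ (-y) = eChar (-ξ) y := by
  rw [eChar, eChar]
  exact Finset.prod_congr rfl fun i _ => by rw [Pi.neg_apply, Pi.neg_apply, fourier_neg_arg]

lemma integral_fourier_unit (n : ℤ) :
    (∫ y : AddCircle (1:ℝ), fourier n y) = if n = 0 then 1 else 0 := by
  have hvol : (volume : Measure (AddCircle (1:ℝ))) = AddCircle.haarAddCircle := by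
    rw [AddCircle.volume_eq_smul_haarAddCircle, ENNReal.ofReal_one, one_smul]
  have h := (orthonormal_iff_ite.mp (orthonormal_fourier (T := 1))) 0 n
  rw [ContinuousMap.inner_toLp] at h
  rw [hvol]
  simpa [fourier_zero, eq_comm] using h

lemma integral_echar (μ : Fin 2 → ℤ) : (∫ y : T2, eChar μ y) = if μ = 0 then 1 else 0 := by
  have h : (∫ y : T2, eChar μ y) = ∏ i, ∫ z : AddCircle (1:ℝ), fourier (μ i) z :=
    MeasureTheory.integral_fintype_prod_eq_prod (ι := Fin 2) (f := fun i z => fourier (μ i) z)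
  rw [h]
  by_cases hμ : μ = 0
  · subst hμ; simp [integral_fourier_unit]
  · obtain ⟨i, hi⟩ := Function.ne_iff.mp hμ
    rw [if_neg hμ, Finset.prod_eq_zero (Finset.mem_univ i)]
    rw [integral_fourier_unit, if_neg (by simpa using hi)]

lemma prod_split {N : ℕ} {j l : Fin N} (hjl : j ≠ l) (g : Fin N → ℂ)
    (hg : ∀ m, m ≠ j → m ≠ l → g m = 1) : ∏ m, g m = g j * g l := by
  rw [← Finset.mul_prod_erase univ g (Finset.mem_univ j),
    ← Finset.mul_prod_erase (univ.erase j) g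
      (Finset.mem_erase.mpr ⟨Ne.symm hjl, Finset.mem_univ l⟩),
    Finset.prod_eq_one (fun m hm => by
      obtain ⟨hml, hm2⟩ := Finset.mem_erase.mp hm
      obtain ⟨hmj, -⟩ := Finset.mem_erase.mp hm2
      exact hg m hmj hml), mul_one]

lemma integral_echar_pair {N : ℕ} {j l : Fin N} (hjl : j ≠ l) (μ ν : Fin 2 → ℤ) :
    (∫ x : Fin N → T2, eChar μ (x j) * eChar ν (x l))
      = (if μ = 0 then 1 else 0) * (if ν = 0 then 1 else 0) := by
  classical
  set h : Fin N → T2 → ℂ :=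
    fun m z => if m = j then eChar μ z else if m = l then eChar ν z else 1 with hh
  have h1 : (fun x : Fin N → T2 => eChar μ (x j) * eChar ν (x l))
      = fun x => ∏ m, h m (x m) := by
    funext x
    rw [prod_split hjl (fun m => h m (x m)) (fun m hmj hml => by simp [hh, hmj, hml])]
    simp [hh, Ne.symm hjl]
  rw [h1, MeasureTheory.volume_pi, MeasureTheory.integral_fintype_prod_eq_prod (f := h),
    prod_split hjl (fun m => ∫ z, h m z) (fun m hmj hml => by simp [hh, hmj, hml])]
  have e1 : (∫ z : T2, h j z) = if μ = 0 then 1 else 0 := by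
    simp only [hh, if_pos rfl]; exact integral_echar μ
  have e2 : (∫ z : T2, h l z) = if ν = 0 then 1 else 0 := by
    simp only [hh, if_neg (Ne.symm hjl), if_pos rfl]; exact integral_echar ν
  rw [e1, e2]

section DD
variable {N : ℕ} {dd : Fin N → ((Fin N → T2) → ℂ)}

lemma dd_norm_le (hnorm : ∀ x, ∑ j, ‖dd j x‖ ^ 2 = 1) (j : Fin N) (x : Fin N → T2) :
    ‖dd j x‖ ≤ 1 := by
  have h2 : ‖dd j x‖ ^ 2 ≤ 1 := by
    rw [← hnorm x]
    exact Finset.single_le_sum (f := fun i => ‖dd i x‖ ^ 2) (fun i _ => by positivity)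
      (Finset.mem_univ j)
  nlinarith [norm_nonneg (dd j x)]

lemma measurable_dsum (hmeas : ∀ j, Measurable (dd j)) (ξ : Fin 2 → ℤ) :
    Measurable (fun x => dsum dd x ξ) := by
  unfold dsum
  exact Finset.measurable_sum _ fun j _ =>
    (hmeas j).mul ((echar_continuous ξ).measurable.comp (measurable_pi_apply j).neg)

lemma norm_dsum_le (hnorm : ∀ x, ∑ j, ‖dd j x‖ ^ 2 = 1) (ξ : Fin 2 → ℤ) (x : Fin N → T2) :
    ‖dsum dd x ξ‖ ≤ N := by
  unfold dsum
  refine le_trans (norm_sum_le _ _) ?_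
  have h1 : ∀ j : Fin N, ‖dd j x * eChar ξ (-(x j))‖ ≤ 1 := fun j => by
    rw [norm_mul, echar_norm, mul_one]; exact dd_norm_le hnorm j x
  calc ∑ j, ‖dd j x * eChar ξ (-(x j))‖ ≤ ∑ _j : Fin N, (1:ℝ) :=
        Finset.sum_le_sum fun j _ => h1 j
    _ = N := by simp

lemma integrable_ndsq (hmeas : ∀ j, Measurable (dd j)) (hnorm : ∀ x, ∑ j, ‖dd j x‖ ^ 2 = 1)
    (ξ : Fin 2 → ℤ) : Integrable (fun x : Fin N → T2 => ‖dsum dd x ξ‖ ^ 2) := by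
  refine (integrable_const ((N:ℝ)^2)).mono'
    (((measurable_dsum hmeas ξ).norm.pow_const 2).aestronglyMeasurable)
    (ae_of_all _ fun x => ?_)
  rw [Real.norm_of_nonneg (by positivity)]
  exact pow_le_pow_left₀ (norm_nonneg _) (norm_dsum_le hnorm ξ x) 2

end DD

noncomputable def Ifun {N : ℕ} (dd : Fin N → ((Fin N → T2) → ℂ)) (ξ : Fin 2 → ℤ) : ℝ :=
  ∫ x : Fin N → T2, ‖dsum dd x ξ‖ ^ 2

section DD2
variable {N : ℕ} {dd : Fin N → ((Fin N → T2) → ℂ)}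
  (hmeas : ∀ j, Measurable (dd j)) (hnorm : ∀ x, ∑ j, ‖dd j x‖ ^ 2 = 1)

include hmeas hnorm

lemma Ifun_nonneg (ξ : Fin 2 → ℤ) : 0 ≤ Ifun dd ξ :=
  integral_nonneg fun x => by positivity

lemma Ifun_dev_le (ξ : Fin 2 → ℤ) : |Ifun dd ξ - 1| ≤ (N:ℝ)^2 + 1 := by
  have h0 : 0 ≤ Ifun dd ξ := integral_nonneg fun x => by positivity
  have h1 : Ifun dd ξ ≤ (N:ℝ)^2 := by
    refine le_trans (integral_mono (integrable_ndsq hmeas hnorm ξ) (integrable_const _)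
      fun x => pow_le_pow_left₀ (norm_nonneg _) (norm_dsum_le hnorm ξ x) 2) ?_
    simp
  rw [abs_le]; constructor <;> nlinarith

lemma integ_pair (j l : Fin N) (ξ : Fin 2 → ℤ) :
    Integrable (fun x : Fin N → T2 =>
      (dd j x * eChar ξ (-(x j))) * conj (dd l x * eChar ξ (-(x l)))) := by
  have hm : Measurable (fun x : Fin N → T2 =>
      (dd j x * eChar ξ (-(x j))) * conj (dd l x * eChar ξ (-(x l)))) := by
    refine ((hmeas j).mul
      ((echar_continuous ξ).measurable.comp (measurable_pi_apply j).neg)).mul ?_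
    exact RCLike.continuous_conj.measurable.comp
      ((hmeas l).mul ((echar_continuous ξ).measurable.comp (measurable_pi_apply l).neg))
  refine (integrable_const (1:ℝ)).mono' hm.aestronglyMeasurable (ae_of_all _ fun x => ?_)
  rw [norm_mul, RCLike.norm_conj, norm_mul, norm_mul, echar_norm, echar_norm, mul_one, mul_one]
  exact mul_le_one₀ (dd_norm_le hnorm j x) (norm_nonneg _) (dd_norm_le hnorm l x)

lemma integrable_dd_sq (j : Fin N) : Integrable (fun x : Fin N → T2 => ‖dd j x‖ ^ 2) := by
  refine (integrable_const (1:ℝ)).mono'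
    (((hmeas j).norm.pow_const 2).aestronglyMeasurable) (ae_of_all _ fun x => ?_)
  rw [Real.norm_of_nonneg (by positivity)]
  exact pow_le_one₀ (norm_nonneg _) (dd_norm_le hnorm j x)

lemma Ifun_expand (ξ : Fin 2 → ℤ) :
    ((Ifun dd ξ : ℝ) : ℂ) = 1 + ∑ p ∈ (univ : Finset (Fin N)).offDiag,
      ∫ x : Fin N → T2, (dd p.1 x * eChar ξ (-(x p.1))) * conj (dd p.2 x * eChar ξ (-(x p.2))) := by
  have hIc : ((Ifun dd ξ : ℝ) : ℂ) = ∫ x : Fin N → T2, ((‖dsum dd x ξ‖ ^ 2 : ℝ) : ℂ) :=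
    integral_ofReal.symm
  have hpt : ∀ x : Fin N → T2, ((‖dsum dd x ξ‖ ^ 2 : ℝ) : ℂ)
      = ∑ p ∈ (univ ×ˢ univ : Finset (Fin N × Fin N)),
          (dd p.1 x * eChar ξ (-(x p.1))) * conj (dd p.2 x * eChar ξ (-(x p.2))) := by
    intro x
    have hz : (dsum dd x ξ) * conj (dsum dd x ξ) = ((‖dsum dd x ξ‖ ^ 2 : ℝ) : ℂ) := by
      rw [Complex.mul_conj, Complex.normSq_eq_norm_sq]
    rw [← hz, dsum, map_sum, Finset.sum_mul_sum, ← Finset.sum_product']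
  rw [hIc]
  calc (∫ x : Fin N → T2, ((‖dsum dd x ξ‖ ^ 2 : ℝ) : ℂ))
      = ∫ x : Fin N → T2, ∑ p ∈ (univ ×ˢ univ : Finset (Fin N × Fin N)),
          (dd p.1 x * eChar ξ (-(x p.1))) * conj (dd p.2 x * eChar ξ (-(x p.2))) := by
        exact integral_congr_ae (ae_of_all _ hpt)
    _ = ∑ p ∈ (univ ×ˢ univ : Finset (Fin N × Fin N)),
          ∫ x : Fin N → T2, (dd p.1 x * eChar ξ (-(x p.1))) * conj (dd p.2 x * eChar ξ (-(x p.2))) :=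
        integral_finset_sum _ (fun p _ => integ_pair hmeas hnorm p.1 p.2 ξ)
    _ = 1 + ∑ p ∈ (univ : Finset (Fin N)).offDiag,
          ∫ x : Fin N → T2, (dd p.1 x * eChar ξ (-(x p.1))) * conj (dd p.2 x * eChar ξ (-(x p.2))) := by
        rw [← Finset.diag_union_offDiag (univ : Finset (Fin N)),
          Finset.sum_union (Finset.disjoint_diag_offDiag _), Finset.sum_diag]
        congr 1
        have hdiag : ∀ j : Fin N,
            (∫ x : Fin N → T2, (dd j x * eChar ξ (-(x j))) * conj (dd j x * eChar ξ (-(x j))))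
            = ((∫ x : Fin N → T2, ‖dd j x‖ ^ 2 : ℝ) : ℂ) := by
          intro j
          refine (integral_congr_ae (ae_of_all _ fun x => ?_)).trans integral_ofReal
          rw [Complex.mul_conj, Complex.normSq_eq_norm_sq,
            norm_mul, echar_norm, mul_one]
          norm_cast
        rw [Finset.sum_congr rfl fun j _ => hdiag j, ← Complex.ofReal_sum,
          ← integral_finset_sum _ (fun j _ => integrable_dd_sq hmeas hnorm j)]
        simp only [hnorm]
        simp

end DD2

section DD3
variable {N : ℕ} {dd : Fin N → ((Fin N → T2) → ℂ)}
  (hmeas : ∀ j, Measurable (dd j)) (hnorm : ∀ x, ∑ j, ‖dd j x‖ ^ 2 = 1)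

lemma l2_inner_eq (f g : (Fin N → T2) → ℂ) (hf : MemLp f 2 volume) (hg : MemLp g 2 volume) :
    inner (𝕜 := ℂ) (hf.toLp f) (hg.toLp g) = ∫ x, conj (f x) * g x := by
  rw [MeasureTheory.L2.inner_def]
  refine integral_congr_ae ?_
  filter_upwards [hf.coeFn_toLp, hg.coeFn_toLp] with x h1 h2
  rw [h1, h2, RCLike.inner_apply']

include hmeas hnorm in
lemma cross_tendsto (j l : Fin N) (hjl : j ≠ l) :
    Tendsto (fun ξ : Fin 2 → ℤ => ∫ x : Fin N → T2,
        (dd j x * eChar ξ (-(x j))) * conj (dd l x * eChar ξ (-(x l))))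
      cofinite (nhds 0) := by
  classical
  set G : (Fin N → T2) → ℂ := fun x => dd j x * conj (dd l x) with hG
  set V : (Fin 2 → ℤ) → (Fin N → T2) → ℂ :=
    fun ξ x => conj (eChar ξ (-(x j))) * eChar ξ (-(x l)) with hVdef
  have hGmeas : Measurable G :=
    (hmeas j).mul (RCLike.continuous_conj.measurable.comp (hmeas l))
  have hG2 : MemLp G 2 volume := by
    refine MemLp.of_bound hGmeas.aestronglyMeasurable 1 (ae_of_all _ fun x => ?_)
    rw [hG, norm_mul, RCLike.norm_conj]
    exact mul_le_one₀ (dd_norm_le hnorm j x) (norm_nonneg _) (dd_norm_le hnorm l x)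
  have hVmeas : ∀ ξ, Measurable (V ξ) := fun ξ =>
    (RCLike.continuous_conj.measurable.comp
      ((echar_continuous ξ).measurable.comp (measurable_pi_apply j).neg)).mul
      ((echar_continuous ξ).measurable.comp (measurable_pi_apply l).neg)
  have hV2 : ∀ ξ, MemLp (V ξ) 2 volume := by
    intro ξ
    refine MemLp.of_bound (hVmeas ξ).aestronglyMeasurable 1 (ae_of_all _ fun x => ?_)
    rw [hVdef]
    simp only []
    rw [norm_mul, RCLike.norm_conj, echar_norm, echar_norm, mul_one]
  set VL : (Fin 2 → ℤ) → Lp ℂ 2 (volume : Measure (Fin N → T2)) :=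
    fun ξ => (hV2 ξ).toLp (V ξ) with hVL
  set Gl : Lp ℂ 2 (volume : Measure (Fin N → T2)) := hG2.toLp G with hGL
  have hortho : Orthonormal ℂ VL := by
    rw [orthonormal_iff_ite]
    intro ξ ξ'
    rw [hVL]
    rw [l2_inner_eq _ _ (hV2 ξ) (hV2 ξ')]
    have hpt : ∀ x : Fin N → T2, conj (V ξ x) * V ξ' x
        = eChar (ξ' - ξ) (x j) * eChar (ξ - ξ') (x l) := by
      intro x
      have h1 : conj (V ξ x) * V ξ' x
          = (eChar (-ξ) (x j) * eChar ξ' (x j)) * (eChar ξ (x l) * eChar (-ξ') (x l)) := by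
        rw [hVdef]
        simp only [map_mul, RCLike.conj_conj]
        rw [echar_conj, echar_conj, echar_neg_arg, echar_neg_arg, echar_neg_arg,
          echar_neg_arg, neg_neg, neg_neg]
        ring
      rw [h1, echar_mul, echar_mul, neg_add_eq_sub, ← sub_eq_add_neg]
    rw [integral_congr_ae (ae_of_all _ hpt), integral_echar_pair hjl]
    by_cases h : ξ = ξ'
    · subst h; simp
    · simp [sub_eq_zero, h, Ne.symm h]
  have hval : ∀ ξ, inner (𝕜 := ℂ) (VL ξ) Gl = ∫ x : Fin N → T2,
      (dd j x * eChar ξ (-(x j))) * conj (dd l x * eChar ξ (-(x l))) := by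
    intro ξ
    rw [hVL, hGL, l2_inner_eq _ _ (hV2 ξ) hG2]
    refine integral_congr_ae (ae_of_all _ fun x => ?_)
    rw [hVdef, hG]
    simp only [map_mul, RCLike.conj_conj]
    ring
  have hsum : Summable fun ξ => ‖inner (𝕜 := ℂ) (VL ξ) Gl‖ ^ 2 :=
    hortho.inner_products_summable (x := Gl)
  have htz : Tendsto (fun ξ => ‖inner (𝕜 := ℂ) (VL ξ) Gl‖ ^ 2) cofinite (nhds 0) :=
    hsum.tendsto_cofinite_zero
  have htn : Tendsto (fun ξ => ‖inner (𝕜 := ℂ) (VL ξ) Gl‖) cofinite (nhds 0) := by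
    have hs := (Real.continuous_sqrt.tendsto' 0 0 (by simp)).comp htz
    have heq : (fun ξ => Real.sqrt (‖inner (𝕜 := ℂ) (VL ξ) Gl‖ ^ 2))
        = fun ξ => ‖inner (𝕜 := ℂ) (VL ξ) Gl‖ :=
      funext fun ξ => Real.sqrt_sq (norm_nonneg _)
    rw [← heq]
    exact hs
  have hfin : Tendsto (fun ξ => inner (𝕜 := ℂ) (VL ξ) Gl) cofinite (nhds 0) :=
    tendsto_zero_iff_norm_tendsto_zero.mpr htn
  exact hfin.congr hval

include hmeas hnorm in
lemma tendsto_Ifun : Tendsto (Ifun dd) cofinite (nhds 1) := by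
  have h0 : Tendsto (fun ξ : Fin 2 → ℤ => (1:ℂ) + ∑ p ∈ (univ : Finset (Fin N)).offDiag,
      ∫ x : Fin N → T2, (dd p.1 x * eChar ξ (-(x p.1))) * conj (dd p.2 x * eChar ξ (-(x p.2))))
      cofinite (nhds (1 + ∑ p ∈ (univ : Finset (Fin N)).offDiag, (0:ℂ))) :=
    tendsto_const_nhds.add (tendsto_finset_sum _ fun p hp =>
      cross_tendsto hmeas hnorm p.1 p.2 (Finset.mem_offDiag.mp hp).2.2)
  have hC : Tendsto (fun ξ => ((Ifun dd ξ : ℝ) : ℂ)) cofinite (nhds 1) := by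
    have h1 := h0.congr (fun ξ => (Ifun_expand hmeas hnorm ξ).symm)
    simpa using h1
  have h2 := (Complex.continuous_re.tendsto 1).comp hC
  simpa [Function.comp_def, Complex.ofReal_re] using h2

end DD3

lemma one_le_four_pi_sq : (1:ℝ) ≤ 4 * Real.pi ^ 2 := by
  nlinarith [Real.pi_gt_three]

lemma qf_finite (t : ℝ) : {ξ : Fin 2 → ℤ | qf ξ ≤ t}.Finite := by
  obtain ⟨n, hn⟩ := exists_nat_ge t
  have hsub : {ξ : Fin 2 → ℤ | qf ξ ≤ t} ⊆
      Set.pi Set.univ (fun _ : Fin 2 => Set.Icc (-(n:ℤ)) (n:ℤ)) := by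
    intro ξ hξ
    intro i _
    have hq : qf ξ ≤ (n:ℝ) := le_trans hξ hn
    have hterm : ((ξ i : ℝ)) ^ 2 ≤ ∑ i', ((ξ i' : ℝ)) ^ 2 :=
      Finset.single_le_sum (f := fun i' => ((ξ i' : ℝ)) ^ 2) (fun i' _ => by positivity)
        (Finset.mem_univ i)
    have hq2 : ((ξ i : ℝ)) ^ 2 ≤ (n:ℝ) := by
      have := one_le_four_pi_sq
      have hsum : ∑ i', ((ξ i' : ℝ)) ^ 2 ≤ (n:ℝ) := by
        by_contra hcon
        push_neg at hcon
        have : (n:ℝ) < qf ξ := by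
          unfold qf
          nlinarith [Finset.sum_nonneg (fun i' (_ : i' ∈ (univ : Finset (Fin 2))) =>
            sq_nonneg ((ξ i' : ℝ)))]
        linarith
      linarith
    have hn2 : (n:ℝ) ≤ (n:ℝ)^2 := by
      rcases Nat.eq_zero_or_pos n with h | h
      · subst h; norm_num
      · have : (1:ℝ) ≤ (n:ℝ) := by exact_mod_cast h
        nlinarith
    have habs : |(ξ i : ℝ)| ≤ (n:ℝ) := by
      rw [← Real.sqrt_sq_eq_abs]
      calc Real.sqrt (((ξ i : ℝ)) ^ 2) ≤ Real.sqrt ((n:ℝ)^2) := by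
            apply Real.sqrt_le_sqrt; linarith
        _ = (n:ℝ) := Real.sqrt_sq (by positivity)
    have : |ξ i| ≤ (n:ℤ) := by exact_mod_cast habs
    exact Set.mem_Icc.mpr (abs_le.mp this)
  exact Set.Finite.subset (Set.Finite.pi fun _ => Set.finite_Icc _ _) hsub

lemma exists_qf_ge (t : ℝ) : ∃ ξ : Fin 2 → ℤ, t ≤ qf ξ := by
  obtain ⟨n, hn⟩ := exists_nat_ge t
  refine ⟨fun _ => (n:ℤ), le_trans hn ?_⟩
  unfold qf
  rw [Fin.sum_univ_two]
  push_cast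
  have h1 : (n:ℝ) ≤ (n:ℝ)^2 := by
    rcases Nat.eq_zero_or_pos n with h | h
    · subst h; norm_num
    · have : (1:ℝ) ≤ (n:ℝ) := by exact_mod_cast h
      nlinarith
  have h2 := one_le_four_pi_sq
  nlinarith [sq_nonneg ((n:ℝ))]

lemma isSum2Sq_infinite : (setOf IsSum2Sq).Infinite := by
  apply Set.infinite_of_injective_forall_mem (f := fun n : ℕ => n ^ 2)
  · intro a b hab
    simpa using Nat.pow_left_injective (by norm_num) hab
  · intro n
    exact ⟨(n:ℤ), 0, by push_cast; ring⟩

lemma nth_S2_strictMono : StrictMono (Nat.nth IsSum2Sq) :=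
  Nat.nth_strictMono isSum2Sq_infinite

lemma nseq_strictMono : StrictMono nseq := by
  intro a b hab
  unfold nseq
  have := nth_S2_strictMono hab
  have h4 : (0:ℝ) < 4 * Real.pi ^ 2 := by nlinarith [Real.pi_gt_three]
  have : ((Nat.nth IsSum2Sq a : ℝ)) < (Nat.nth IsSum2Sq b : ℝ) := by exact_mod_cast this
  nlinarith

lemma nseq_ge (k : ℕ) : (k:ℝ) ≤ nseq k := by
  unfold nseq
  have h1 : (k:ℝ) ≤ (Nat.nth IsSum2Sq k : ℝ) := by
    exact_mod_cast nth_S2_strictMono.le_apply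
  have h2 := one_le_four_pi_sq
  have h3 : (0:ℝ) ≤ (Nat.nth IsSum2Sq k : ℝ) := Nat.cast_nonneg _
  nlinarith

lemma nseq_nonneg (k : ℕ) : 0 ≤ nseq k := by
  unfold nseq
  positivity

lemma nseq_tendsto : Tendsto nseq atTop atTop :=
  tendsto_atTop_mono nseq_ge tendsto_natCast_atTop_atTop

end AuxLemmas

/-- Asymptotics of the expectations of `𝒜_ζ^{(k)}` and `ℬ^{(k)}`, and of
their ratio. -/
theorem expectation_asymptotics {N : ℕ} (hN : 1 ≤ N)
    (dd : Fin N → ((Fin N → T2) → ℂ)) (hmeas : ∀ j, Measurable (dd j))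
    (hnorm : ∀ x, ∑ j, ‖dd j x‖ ^ 2 = 1)
    (δ : ℝ) (hδ : δ ∈ Set.Ioo (θH / 2) (1/2 - θH))
    (ζ : Fin 2 → ℤ)
    (ξ₀ : ℕ → Fin 2 → ℤ) (hξ₀ : ∀ k : ℕ, 1 ≤ k → qf (ξ₀ k) = nseq (k - 1)) :
    ∃ η : ℕ → ℝ, Tendsto η atTop (nhds 0) ∧
      (∀ k : ℕ, 1 ≤ k →
        |(∫ x : Fin N → T2, Afun dd ζ (nseq k) (nseq (k + 1)) ((nseq k) ^ δ) x)
            - SigmaSum ζ (nseq k) (nseq (k + 1)) ((nseq k) ^ δ)|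
          ≤ η k * SigmaSum ζ (nseq k) (nseq (k + 1)) ((nseq k) ^ δ) ∧
        |(∫ x : Fin N → T2, Bfun dd (ξ₀ k) (nseq (k + 1)) (nseq (k - 1)) x)
            - ((nseq (k + 1) - nseq (k - 1)) ^ 2)⁻¹|
          ≤ η k * ((nseq (k + 1) - nseq (k - 1)) ^ 2)⁻¹) ∧
      ((∀ᶠ k : ℕ in atTop, 0 < SigmaSum ζ (nseq k) (nseq (k + 1)) ((nseq k) ^ δ)) →
        Tendsto (fun k : ℕ =>
          ((∫ x : Fin N → T2, Afun dd ζ (nseq k) (nseq (k + 1)) ((nseq k) ^ δ) x)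
            / (∫ x : Fin N → T2, Bfun dd (ξ₀ k) (nseq (k + 1)) (nseq (k - 1)) x))
          / ((nseq (k + 1) - nseq (k - 1)) ^ 2
              * SigmaSum ζ (nseq k) (nseq (k + 1)) ((nseq k) ^ δ)))
          atTop (nhds 1)) := by
  classical
  obtain ⟨hδ1, hδ2⟩ := hδ
  have hθpos : (0:ℝ) < θH := by norm_num [θH]
  have hδ0 : 0 ≤ δ := le_of_lt (lt_of_le_of_lt (by positivity) hδ1)
  have hδhalf : δ ≤ 1/2 := by linarith
  -- the deviation function and the error sequence
  set cdev : (Fin 2 → ℤ) → ℝ := fun ξ => |Ifun dd ξ - 1| with hcdev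
  set tk : ℕ → ℝ := fun k => min (nseq k - (nseq k) ^ δ) (nseq (k - 1)) with htkdef
  set η : ℕ → ℝ := fun k => sSup (cdev '' {ξ | tk k ≤ qf ξ}) with hηdef
  have hbdd : ∀ k, BddAbove (cdev '' {ξ | tk k ≤ qf ξ}) := fun k =>
    ⟨(N:ℝ)^2 + 1, by rintro y ⟨ξ, -, rfl⟩; exact Ifun_dev_le hmeas hnorm ξ⟩
  have hne : ∀ k, (cdev '' {ξ | tk k ≤ qf ξ}).Nonempty := fun k => by
    obtain ⟨ξ, hξ⟩ := exists_qf_ge (tk k); exact ⟨cdev ξ, ξ, hξ, rfl⟩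
  have hub : ∀ k ξ, tk k ≤ qf ξ → cdev ξ ≤ η k := fun k ξ h => le_csSup (hbdd k) ⟨ξ, h, rfl⟩
  have hη0 : ∀ k, 0 ≤ η k := fun k => by
    obtain ⟨ξ, hξ⟩ := exists_qf_ge (tk k)
    exact le_trans (abs_nonneg _) (hub k ξ hξ)
  -- tk tends to infinity
  have htka : Tendsto (fun k => nseq k - (nseq k) ^ δ) atTop atTop := by
    have hev : ∀ᶠ k in atTop, nseq k / 2 ≤ nseq k - (nseq k) ^ δ := by
      filter_upwards [nseq_tendsto.eventually_ge_atTop 4] with k hk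
      have hx0 : (0:ℝ) ≤ nseq k := nseq_nonneg k
      have hsq := Real.sq_sqrt hx0
      have hs2 : (2:ℝ) ≤ Real.sqrt (nseq k) := by
        rw [show (2:ℝ) = Real.sqrt 4 by
          rw [show (4:ℝ) = 2^2 by norm_num, Real.sqrt_sq (by norm_num)]]
        exact Real.sqrt_le_sqrt hk
      have h1 : (nseq k) ^ δ ≤ Real.sqrt (nseq k) := by
        rw [Real.sqrt_eq_rpow]
        exact Real.rpow_le_rpow_of_exponent_le (by linarith) hδhalf
      nlinarith
    have hdiv : Tendsto (fun k => nseq k / 2) atTop atTop :=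
      nseq_tendsto.atTop_div_const (by norm_num)
    exact tendsto_atTop_mono' _ hev hdiv
  have htkb : Tendsto (fun k : ℕ => nseq (k - 1)) atTop atTop := by
    have h2 : Tendsto (fun k : ℕ => ((k - 1 : ℕ) : ℝ)) atTop atTop :=
      tendsto_natCast_atTop_atTop.comp (tendsto_sub_atTop_nat 1)
    exact tendsto_atTop_mono (fun k => nseq_ge (k - 1)) h2
  have htkt : Tendsto tk atTop atTop := by
    rw [tendsto_atTop]
    intro b
    filter_upwards [htka.eventually_ge_atTop b, htkb.eventually_ge_atTop b] with k h1 h2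
    exact le_min h1 h2
  -- η tends to zero
  have hηt : Tendsto η atTop (nhds 0) := by
    rw [Metric.tendsto_atTop]
    intro ε hε
    have hev := Metric.tendsto_nhds.mp (tendsto_Ifun hmeas hnorm) (ε/2) (by linarith)
    rw [Filter.eventually_cofinite] at hev
    set M : ℝ := ∑ ξ ∈ hev.toFinset, |qf ξ| with hM
    have hMb : ∀ ξ, ¬ dist (Ifun dd ξ) 1 < ε/2 → qf ξ ≤ M := by
      intro ξ hξ
      refine le_trans (le_abs_self _) ?_
      exact Finset.single_le_sum (f := fun ξ' => |qf ξ'|) (fun _ _ => abs_nonneg _)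
        (hev.mem_toFinset.mpr hξ)
    obtain ⟨K, hK⟩ := Filter.eventually_atTop.mp (htkt.eventually_gt_atTop M)
    refine ⟨K, fun k hk => ?_⟩
    have hsup : η k ≤ ε/2 := by
      refine csSup_le (hne k) ?_
      rintro y ⟨ξ, hξ, rfl⟩
      by_contra hcon
      push_neg at hcon
      have hnd : ¬ dist (Ifun dd ξ) 1 < ε/2 := by
        rw [Real.dist_eq]
        simp only [hcdev] at hcon
        linarith
      have hA := hMb ξ hnd
      have hB := hK k hk
      have : tk k ≤ qf ξ := hξ
      linarith
    rw [Real.dist_eq, sub_zero, abs_of_nonneg (hη0 k)]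
    linarith
  -- the main per-k inequalities
  have hmain : ∀ k : ℕ, 1 ≤ k →
      |(∫ x : Fin N → T2, Afun dd ζ (nseq k) (nseq (k + 1)) ((nseq k) ^ δ) x)
          - SigmaSum ζ (nseq k) (nseq (k + 1)) ((nseq k) ^ δ)|
        ≤ η k * SigmaSum ζ (nseq k) (nseq (k + 1)) ((nseq k) ^ δ) ∧
      |(∫ x : Fin N → T2, Bfun dd (ξ₀ k) (nseq (k + 1)) (nseq (k - 1)) x)
          - ((nseq (k + 1) - nseq (k - 1)) ^ 2)⁻¹|
        ≤ η k * ((nseq (k + 1) - nseq (k - 1)) ^ 2)⁻¹ := by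
    intro k hk
    set nk := nseq k with hnk
    set nk1 := nseq (k + 1) with hnk1
    set nkm := nseq (k - 1) with hnkm
    set L0 := (nseq k) ^ δ with hL0
    set F : Finset (Fin 2 → ℤ) := (qf_finite (nk + L0)).toFinset with hF
    have hvanish : ∀ ξ, ξ ∉ F → ¬ (|qf ξ - nk| ≤ L0) := by
      intro ξ hξ hcon
      apply hξ
      rw [hF, Set.Finite.mem_toFinset]
      have := (abs_le.mp hcon).2
      simpa using by linarith
    set c1 : (Fin 2 → ℤ) → ℝ := fun ξ =>
      if |qf ξ - nk| ≤ L0 ∧ qf (ξ + ζ) < nk then ((qf (ξ + ζ) - nk) ^ 2)⁻¹ else 0 with hc1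
    set c2 : (Fin 2 → ℤ) → ℝ := fun ξ =>
      if |qf ξ - nk| ≤ L0 ∧ nk1 < qf (ξ + ζ) then ((qf (ξ + ζ) - nk1) ^ 2)⁻¹ else 0 with hc2
    have hc10 : ∀ ξ, 0 ≤ c1 ξ := fun ξ => by rw [hc1]; dsimp only; split <;> positivity
    have hc20 : ∀ ξ, 0 ≤ c2 ξ := fun ξ => by rw [hc2]; dsimp only; split <;> positivity
    have hqlb : ∀ ξ, |qf ξ - nk| ≤ L0 → tk k ≤ qf ξ := by
      intro ξ h
      have h1 := (abs_le.mp h).1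
      calc tk k ≤ nk - L0 := min_le_left _ _
        _ ≤ qf ξ := by linarith
    have hSig : SigmaSum ζ nk nk1 L0 = ∑ ξ ∈ F, c1 ξ + ∑ ξ ∈ F, c2 ξ := by
      unfold SigmaSum
      rw [tsum_eq_sum (s := F) (fun ξ hξ => if_neg (fun hc => hvanish ξ hξ hc.1)),
        tsum_eq_sum (s := F) (fun ξ hξ => if_neg (fun hc => hvanish ξ hξ hc.1))]
    have hA : (∫ x : Fin N → T2, Afun dd ζ nk nk1 L0 x)
        = ∑ ξ ∈ F, c1 ξ * Ifun dd ξ + ∑ ξ ∈ F, c2 ξ * Ifun dd ξ := by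
      have hfun : ∀ x : Fin N → T2, Afun dd ζ nk nk1 L0 x
          = ∑ ξ ∈ F, c1 ξ * ‖dsum dd x ξ‖ ^ 2 + ∑ ξ ∈ F, c2 ξ * ‖dsum dd x ξ‖ ^ 2 := by
        intro x
        unfold Afun
        rw [tsum_eq_sum (s := F) (fun ξ hξ => if_neg (fun hc => hvanish ξ hξ hc.1)),
          tsum_eq_sum (s := F) (fun ξ hξ => if_neg (fun hc => hvanish ξ hξ hc.1))]
        congr 1 <;> exact Finset.sum_congr rfl (fun ξ _ => by rw [ite_mul, zero_mul])
      have hint1 : Integrable (fun x : Fin N → T2 => ∑ ξ ∈ F, c1 ξ * ‖dsum dd x ξ‖ ^ 2) :=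
        integrable_finset_sum _ (fun ξ _ => (integrable_ndsq hmeas hnorm ξ).const_mul _)
      have hint2 : Integrable (fun x : Fin N → T2 => ∑ ξ ∈ F, c2 ξ * ‖dsum dd x ξ‖ ^ 2) :=
        integrable_finset_sum _ (fun ξ _ => (integrable_ndsq hmeas hnorm ξ).const_mul _)
      calc (∫ x : Fin N → T2, Afun dd ζ nk nk1 L0 x)
          = ∫ x : Fin N → T2, (∑ ξ ∈ F, c1 ξ * ‖dsum dd x ξ‖ ^ 2
              + ∑ ξ ∈ F, c2 ξ * ‖dsum dd x ξ‖ ^ 2) :=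
            integral_congr_ae (ae_of_all _ hfun)
        _ = ∑ ξ ∈ F, c1 ξ * Ifun dd ξ + ∑ ξ ∈ F, c2 ξ * Ifun dd ξ := by
            rw [integral_add hint1 hint2,
              integral_finset_sum _ (fun ξ _ => (integrable_ndsq hmeas hnorm ξ).const_mul _),
              integral_finset_sum _ (fun ξ _ => (integrable_ndsq hmeas hnorm ξ).const_mul _)]
            congr 1 <;> exact Finset.sum_congr rfl (fun ξ _ => integral_const_mul _ _)
    have hterm : ∀ c : (Fin 2 → ℤ) → ℝ, (∀ ξ, 0 ≤ c ξ) → (∀ ξ, c ξ ≠ 0 → tk k ≤ qf ξ) →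
        |∑ ξ ∈ F, c ξ * (Ifun dd ξ - 1)| ≤ η k * ∑ ξ ∈ F, c ξ := by
      intro c hc0 hcd
      calc |∑ ξ ∈ F, c ξ * (Ifun dd ξ - 1)| ≤ ∑ ξ ∈ F, |c ξ * (Ifun dd ξ - 1)| :=
            Finset.abs_sum_le_sum_abs _ _
        _ ≤ ∑ ξ ∈ F, c ξ * η k := by
            refine Finset.sum_le_sum fun ξ _ => ?_
            rw [abs_mul, abs_of_nonneg (hc0 ξ)]
            by_cases h : c ξ = 0
            · simp [h]
            · exact mul_le_mul_of_nonneg_left (hub k ξ (hcd ξ h)) (hc0 ξ)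
        _ = η k * ∑ ξ ∈ F, c ξ := by rw [← Finset.sum_mul, mul_comm]
    constructor
    · -- A part
      have hdiff : (∫ x : Fin N → T2, Afun dd ζ nk nk1 L0 x) - SigmaSum ζ nk nk1 L0
          = ∑ ξ ∈ F, c1 ξ * (Ifun dd ξ - 1) + ∑ ξ ∈ F, c2 ξ * (Ifun dd ξ - 1) := by
        rw [hA, hSig]
        simp only [mul_sub, mul_one, Finset.sum_sub_distrib]
        ring
      rw [hdiff, hSig]
      calc |∑ ξ ∈ F, c1 ξ * (Ifun dd ξ - 1) + ∑ ξ ∈ F, c2 ξ * (Ifun dd ξ - 1)|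
          ≤ |∑ ξ ∈ F, c1 ξ * (Ifun dd ξ - 1)| + |∑ ξ ∈ F, c2 ξ * (Ifun dd ξ - 1)| :=
            abs_add_le _ _
        _ ≤ η k * ∑ ξ ∈ F, c1 ξ + η k * ∑ ξ ∈ F, c2 ξ := by
            refine add_le_add (hterm c1 hc10 ?_) (hterm c2 hc20 ?_)
            · intro ξ h
              rw [hc1] at h
              by_cases hcond : |qf ξ - nk| ≤ L0 ∧ qf (ξ + ζ) < nk
              · exact hqlb ξ hcond.1
              · exact absurd (by simp [hcond]) h
            · intro ξ h
              rw [hc2] at h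
              by_cases hcond : |qf ξ - nk| ≤ L0 ∧ nk1 < qf (ξ + ζ)
              · exact hqlb ξ hcond.1
              · exact absurd (by simp [hcond]) h
        _ = η k * (∑ ξ ∈ F, c1 ξ + ∑ ξ ∈ F, c2 ξ) := by ring
    · -- B part
      have hB : (∫ x : Fin N → T2, Bfun dd (ξ₀ k) nk1 nkm x)
          = ((nk1 - nkm) ^ 2)⁻¹ * Ifun dd (ξ₀ k) := by
        unfold Bfun
        exact integral_const_mul _ _
      have hq0 : tk k ≤ qf (ξ₀ k) := by
        rw [hξ₀ k hk]
        exact min_le_right _ _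
      have hw0 : (0:ℝ) ≤ ((nk1 - nkm) ^ 2)⁻¹ := by positivity
      rw [hB]
      calc |((nk1 - nkm) ^ 2)⁻¹ * Ifun dd (ξ₀ k) - ((nk1 - nkm) ^ 2)⁻¹|
          = ((nk1 - nkm) ^ 2)⁻¹ * |Ifun dd (ξ₀ k) - 1| := by
            rw [show ((nk1 - nkm) ^ 2)⁻¹ * Ifun dd (ξ₀ k) - ((nk1 - nkm) ^ 2)⁻¹
              = ((nk1 - nkm) ^ 2)⁻¹ * (Ifun dd (ξ₀ k) - 1) by ring, abs_mul,
              abs_of_nonneg hw0]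
        _ ≤ ((nk1 - nkm) ^ 2)⁻¹ * η k := mul_le_mul_of_nonneg_left (hub k _ hq0) hw0
        _ = η k * ((nk1 - nkm) ^ 2)⁻¹ := mul_comm _ _
  refine ⟨η, hηt, hmain, ?_⟩
  -- part 3 : the ratio
  intro hpos
  set a : ℕ → ℝ := fun k => ∫ x : Fin N → T2, Afun dd ζ (nseq k) (nseq (k + 1)) ((nseq k) ^ δ) x
    with ha
  set b : ℕ → ℝ := fun k => ∫ x : Fin N → T2, Bfun dd (ξ₀ k) (nseq (k + 1)) (nseq (k - 1)) x
    with hb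
  set S : ℕ → ℝ := fun k => SigmaSum ζ (nseq k) (nseq (k + 1)) ((nseq k) ^ δ) with hS
  set w0 : ℕ → ℝ := fun k => ((nseq (k + 1) - nseq (k - 1)) ^ 2)⁻¹ with hw0
  have hw0pos : ∀ k, 0 < w0 k := by
    intro k
    have hlt : nseq (k - 1) < nseq (k + 1) := nseq_strictMono (by omega)
    have : (0:ℝ) < (nseq (k + 1) - nseq (k - 1)) ^ 2 := pow_pos (sub_pos.mpr hlt) 2
    exact inv_pos.mpr this
  have hg : Tendsto (fun k => 1 - η k) atTop (nhds 1) := by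
    simpa using tendsto_const_nhds.sub hηt
  have hh : Tendsto (fun k => 1 + η k) atTop (nhds 1) := by
    simpa using tendsto_const_nhds.add hηt
  have h1 : Tendsto (fun k => a k / S k) atTop (nhds 1) := by
    refine tendsto_of_tendsto_of_tendsto_of_le_of_le' hg hh ?_ ?_
    · filter_upwards [hpos, eventually_ge_atTop 1] with k hSp hk
      have h := (hmain k hk).1
      have := (abs_le.mp h).1
      rw [le_div_iff₀ hSp]
      nlinarith
    · filter_upwards [hpos, eventually_ge_atTop 1] with k hSp hk
      have h := (hmain k hk).1
      have := (abs_le.mp h).2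
      rw [div_le_iff₀ hSp]
      nlinarith
  have h2 : Tendsto (fun k => b k / w0 k) atTop (nhds 1) := by
    refine tendsto_of_tendsto_of_tendsto_of_le_of_le' hg hh ?_ ?_
    · filter_upwards [eventually_ge_atTop 1] with k hk
      have h := (hmain k hk).2
      have := (abs_le.mp h).1
      rw [le_div_iff₀ (hw0pos k)]
      nlinarith [hw0pos k]
    · filter_upwards [eventually_ge_atTop 1] with k hk
      have h := (hmain k hk).2
      have := (abs_le.mp h).2
      rw [div_le_iff₀ (hw0pos k)]
      nlinarith [hw0pos k]
  have hfin := h1.div h2 one_ne_zero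
  have heq : ∀ k, (a k / S k) / (b k / w0 k)
      = (a k / b k) / ((nseq (k + 1) - nseq (k - 1)) ^ 2 * S k) := by
    intro k
    rw [hw0]
    simp only [div_eq_mul_inv, mul_inv, inv_inv]
    ring
  have := hfin.congr heq
  simpa using this
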